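/- (Fano-type lemma) Let m ≥ 1, let A_0, …, A_m be pairwise disjoint measurable events in a measurable space (Ω, 𝒜), and let P_0, …, P_m be probability measures on (Ω, 𝒜). Then sup_{0≤i≤m} P_i(A_iᶜ) ≥ min( 1/2, exp(−3e^{-1}) √m · exp(−χ_m) ), where χ_m = min_{0≤v≤m} (1/m) ∑_{k≠v} K(P_k, P_v) and K denotes the Kullback–Leibler divergence. -/

import Mathlib

open MeasureTheory

open Classical in
/-- The Kullback–Leibler divergence `K(P,Q) = ∫ log(dP/dQ) dP` if `P ≪ Q` (with the
log density integrable), and `∞` otherwise. For probability measures it is nonnegative,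
so it is naturally valued in `ℝ≥0∞`. -/
noncomputable def KLdiv {Ω : Type*} [MeasurableSpace Ω] (P Q : Measure Ω) : ENNReal :=
  if P ≪ Q ∧ Integrable (fun ω => Real.log (P.rnDeriv Q ω).toReal) P then
    ENNReal.ofReal (∫ ω, Real.log (P.rnDeriv Q ω).toReal ∂P)
  else ⊤

lemma log_le_div_e {t : ℝ} (ht : 0 < t) : Real.log t ≤ t / Real.exp 1 := by
  have h := Real.log_le_sub_one_of_pos (div_pos ht (Real.exp_pos 1))
  rw [Real.log_div (ne_of_gt ht) (ne_of_gt (Real.exp_pos 1)), Real.log_exp] at h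
  linarith

lemma neg_inv_e_le_mul_log {x : ℝ} (hx : 0 ≤ x) : -(Real.exp 1)⁻¹ ≤ x * Real.log x := by
  rcases eq_or_lt_of_le hx with h | h
  · rw [← h]; simp; positivity
  · have h1 := log_le_div_e (inv_pos.mpr h)
    rw [Real.log_inv] at h1
    have h3 : x * (x⁻¹ / Real.exp 1) = (Real.exp 1)⁻¹ := by field_simp
    nlinarith [Real.exp_pos 1]

lemma setIntegral_log_rnDeriv_ge {Ω : Type*} [MeasurableSpace Ω] (P Q : Measure Ω)
    [IsProbabilityMeasure P] [IsProbabilityMeasure Q] (hPQ : P ≪ Q)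
    (hint : Integrable (fun ω => Real.log (P.rnDeriv Q ω).toReal) P)
    {S : Set Ω} (hS : MeasurableSet S) :
    (P S).toReal * Real.log ((P S).toReal / (Q S).toReal)
      ≤ ∫ ω in S, Real.log (P.rnDeriv Q ω).toReal ∂P := by
  by_cases hP0 : P S = 0
  · rw [hP0]
    simp [Measure.restrict_eq_zero.mpr hP0]
  · set f := P.rnDeriv Q with hf
    have hf_meas : Measurable f := Measure.measurable_rnDeriv P Q
    have hQ0 : Q S ≠ 0 := fun h => hP0 (hPQ h)
    have hPfin : P S ≠ ⊤ := measure_ne_top _ _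
    have hQfin : Q S ≠ ⊤ := measure_ne_top _ _
    set a := (P S).toReal with ha
    set b := (Q S).toReal with hb
    have hapos : 0 < a := ENNReal.toReal_pos hP0 hPfin
    have hbpos : 0 < b := ENNReal.toReal_pos hQ0 hQfin
    -- lintegral bound
    have hkey : ∫⁻ ω in S, (f ω)⁻¹ ∂P ≤ Q S := by
      conv_lhs => rw [← Measure.withDensity_rnDeriv_eq P Q hPQ]
      rw [setLIntegral_withDensity_eq_setLIntegral_mul Q (f := P.rnDeriv Q) (g := fun ω => (f ω)⁻¹) hf_meas (hf_meas.inv) hS]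
      calc ∫⁻ ω in S, (f * fun ω => (f ω)⁻¹) ω ∂Q ≤ ∫⁻ _ in S, 1 ∂Q := by
            apply lintegral_mono; intro ω; exact ENNReal.mul_inv_le_one (f ω)
        _ = Q S := by simp
    have hinvint : Integrable (fun ω => ((f ω)⁻¹).toReal) (P.restrict S) :=
      integrable_toReal_of_lintegral_ne_top (hf_meas.inv).aemeasurable
        (ne_top_of_le_ne_top hQfin hkey)
    have hIleb : ∫ ω in S, ((f ω)⁻¹).toReal ∂P ≤ b := by
      rw [integral_toReal (f := fun ω => (f ω)⁻¹) (hf_meas.inv).aemeasurable ?_]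
      · exact ENNReal.toReal_le_toReal (ne_top_of_le_ne_top hQfin hkey) hQfin |>.mpr hkey
      · apply ae_restrict_of_ae
        filter_upwards [Measure.rnDeriv_pos hPQ] with ω hω
        simpa [hf] using hω
    -- pointwise inequality
    have hae : ∀ᵐ ω ∂(P.restrict S),
        Real.log (a / b) + 1 - (a / b) * ((f ω)⁻¹).toReal ≤ Real.log (f ω).toReal := by
      apply ae_restrict_of_ae
      filter_upwards [Measure.rnDeriv_pos hPQ, hPQ.ae_le (Measure.rnDeriv_lt_top P Q)]
        with ω h0 htop
      have hx : 0 < (f ω).toReal := ENNReal.toReal_pos (ne_of_gt h0) (ne_of_lt htop)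
      have h1 := Real.log_le_sub_one_of_pos (x := (a / b) / (f ω).toReal)
        (div_pos (div_pos hapos hbpos) hx)
      rw [Real.log_div (ne_of_gt (div_pos hapos hbpos)) (ne_of_gt hx)] at h1
      rw [ENNReal.toReal_inv]
      have : (a / b) / (f ω).toReal = (a / b) * ((f ω).toReal)⁻¹ := div_eq_mul_inv _ _
      linarith [this ▸ h1]
    have hintL : Integrable (fun ω => Real.log (f ω).toReal) (P.restrict S) :=
      hint.restrict
    have hintg : Integrable
        (fun ω => Real.log (a / b) + 1 - (a / b) * ((f ω)⁻¹).toReal) (P.restrict S) := by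
      exact (integrable_const _).sub (hinvint.const_mul _)
    have hmono := integral_mono_ae hintg hintL hae
    have hcomp : ∫ ω in S, (Real.log (a / b) + 1 - (a / b) * ((f ω)⁻¹).toReal) ∂P
        = (Real.log (a / b) + 1) * a - (a / b) * ∫ ω in S, ((f ω)⁻¹).toReal ∂P := by
      rw [integral_sub (integrable_const _) (hinvint.const_mul _),
        integral_const, integral_const_mul]
      simp [Measure.restrict_apply_univ, ha, smul_eq_mul, mul_comm, Measure.real]
    rw [hcomp] at hmono
    have hfinal : a * Real.log (a / b)
        ≤ (Real.log (a / b) + 1) * a - (a / b) * ∫ ω in S, ((f ω)⁻¹).toReal ∂P := by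
      have h2 : (a / b) * ∫ ω in S, ((f ω)⁻¹).toReal ∂P ≤ (a / b) * b :=
        mul_le_mul_of_nonneg_left hIleb (le_of_lt (div_pos hapos hbpos))
      have h3 : (a / b) * b = a := by field_simp
      nlinarith
    exact le_trans hfinal hmono

/-- Fano-type lemma: for pairwise disjoint events `A₀,…,A_m` and
probability measures `P₀,…,P_m`,
`sup_i P_i(A_iᶜ) ≥ min(1/2, exp(−3e⁻¹) √m exp(−χ_m))`, where
`χ_m = min_v (1/m) ∑_{k≠v} K(P_k, P_v)` (and `exp(−χ_m) = 0` when `χ_m = ∞`). -/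
theorem stmt9 {Ω : Type*} [MeasurableSpace Ω] (m : ℕ) (hm : 1 ≤ m)
    (A : Fin (m + 1) → Set Ω) (hA : ∀ i, MeasurableSet (A i))
    (hdisj : ∀ i j, i ≠ j → A i ∩ A j = ∅)
    (P : Fin (m + 1) → Measure Ω) (hP : ∀ i, IsProbabilityMeasure (P i)) :
    ENNReal.ofReal
        (min (1 / 2)
          (Real.exp (-(3 * Real.exp (-1))) * Real.sqrt m *
            (if (⨅ v, (m : ENNReal)⁻¹ * ∑ k ∈ Finset.univ.erase v, KLdiv (P k) (P v)) = ⊤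
              then 0
              else Real.exp
                (-(⨅ v, (m : ENNReal)⁻¹ *
                    ∑ k ∈ Finset.univ.erase v, KLdiv (P k) (P v)).toReal))))
      ≤ ⨆ i, P i (A i)ᶜ := by
  have := hP
  set χ := ⨅ v, (m : ENNReal)⁻¹ * ∑ k ∈ Finset.univ.erase v, KLdiv (P k) (P v) with hχdef
  set p := ⨆ i, P i (A i)ᶜ with hpdef
  -- trivial case: sup ≥ 1/2
  by_cases hhalf : ENNReal.ofReal (1 / 2) ≤ p
  · exact le_trans (ENNReal.ofReal_le_ofReal (min_le_left _ _)) hhalf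
  push_neg at hhalf
  -- trivial case: χ = ⊤
  by_cases htop : χ = ⊤
  · rw [if_pos htop, mul_zero]
    have : min (1 / 2 : ℝ) 0 = 0 := by norm_num
    rw [this]
    simp
  rw [if_neg htop]
  -- setup
  have hple : p ≤ 1 := iSup_le fun i => prob_le_one
  have hpne : p ≠ ⊤ := ne_top_of_le_ne_top ENNReal.one_ne_top hple
  set pt := p.toReal with hptdef
  have hptlt : pt < 1 / 2 := by
    have := (ENNReal.lt_ofReal_iff_toReal_lt hpne).mp hhalf
    exact this
  have hptnonneg : 0 ≤ pt := ENNReal.toReal_nonneg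
  -- choose minimizing v
  obtain ⟨v, hv⟩ : ∃ v, (m : ENNReal)⁻¹ * ∑ k ∈ Finset.univ.erase v, KLdiv (P k) (P v) = χ :=
    exists_eq_ciInf_of_finite
  have hminv : (m : ENNReal)⁻¹ ≠ 0 := by
    simp [ENNReal.inv_ne_zero]
  have hsumne : ∑ k ∈ Finset.univ.erase v, KLdiv (P k) (P v) ≠ ⊤ := by
    intro h
    rw [h, ENNReal.mul_top hminv] at hv
    exact htop hv.symm
  have hKne : ∀ k ∈ Finset.univ.erase v, KLdiv (P k) (P v) ≠ ⊤ := fun k hk =>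
    (ENNReal.sum_lt_top.mp (lt_top_iff_ne_top.mpr hsumne) k hk).ne
  -- extract facts from finiteness of KL
  have hKfact : ∀ k ∈ Finset.univ.erase v,
      (P k ≪ P v) ∧ Integrable (fun ω => Real.log ((P k).rnDeriv (P v) ω).toReal) (P k) ∧
      KLdiv (P k) (P v) =
        ENNReal.ofReal (∫ ω, Real.log ((P k).rnDeriv (P v) ω).toReal ∂(P k)) := by
    intro k hk
    have h := hKne k hk
    unfold KLdiv at h ⊢
    split_ifs at h ⊢ with hc
    · exact ⟨hc.1, hc.2, rfl⟩
    · exact absurd rfl h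
  -- basic bounds per k
  have hPA_compl_le : ∀ k : Fin (m+1), (P k (A k)ᶜ).toReal ≤ pt := fun k =>
    ENNReal.toReal_mono hpne (le_iSup (fun i => P i (A i)ᶜ) k)
  have ha_ge : ∀ k : Fin (m+1), 1 - pt ≤ (P k (A k)).toReal := by
    intro k
    have h1 : P k (A k) + P k (A k)ᶜ = 1 := by
      rw [measure_add_measure_compl (hA k)]; exact measure_univ
    have h2 : (P k (A k)).toReal + (P k (A k)ᶜ).toReal = 1 := by
      rw [← ENNReal.toReal_add (measure_ne_top _ _) (measure_ne_top _ _), h1]; simp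
    linarith [hPA_compl_le k]
  have ha_pos : ∀ k : Fin (m+1), 0 < (P k (A k)).toReal := fun k =>
    lt_of_lt_of_le (by linarith) (ha_ge k)
  have hb_le : ∀ k : Fin (m+1), k ≠ v → (P v (A k)).toReal ≤ pt := by
    intro k hk
    refine ENNReal.toReal_mono hpne (le_trans (measure_mono ?_) (le_iSup (fun i => P i (A i)ᶜ) v))
    exact Set.subset_compl_iff_disjoint_right.mpr
      (Set.disjoint_iff_inter_eq_empty.mpr (hdisj k v hk))
  have hb_pos : ∀ k ∈ Finset.univ.erase v, 0 < (P v (A k)).toReal := by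
    intro k hk
    have hacc := (hKfact k hk).1
    rcases eq_or_ne (P v (A k)) 0 with h | h
    · exact absurd (by rw [hacc h]; simp) (ne_of_gt (ha_pos k))
    · exact ENNReal.toReal_pos h (measure_ne_top _ _)
  -- per-k key estimate
  have key : ∀ k ∈ Finset.univ.erase v,
      (1 - pt) * (-Real.log ((P v (A k)).toReal)) - 2 * (Real.exp 1)⁻¹
        ≤ (KLdiv (P k) (P v)).toReal := by
    intro k hk
    obtain ⟨hacc, hintk, hKeq⟩ := hKfact k hk
    haveI := hP k; haveI := hP v
    set a := (P k (A k)).toReal with hadef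
    set b := (P v (A k)).toReal with hbdef
    set a' := (P k (A k)ᶜ).toReal with ha'def
    set b' := (P v (A k)ᶜ).toReal with hb'def
    have h1 := setIntegral_log_rnDeriv_ge (P k) (P v) hacc hintk (hA k)
    have h2 := setIntegral_log_rnDeriv_ge (P k) (P v) hacc hintk (hA k).compl
    have hsplit := integral_add_compl (hA k) hintk (μ := P k)
      (f := fun ω => Real.log ((P k).rnDeriv (P v) ω).toReal)
    have hKge : ∫ ω, Real.log ((P k).rnDeriv (P v) ω).toReal ∂(P k)
        ≤ (KLdiv (P k) (P v)).toReal := by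
      rw [hKeq, ENNReal.toReal_ofReal']
      exact le_max_left _ _
    have hbpos : 0 < b := hb_pos k hk
    have hapos : 0 < a := ha_pos k
    have hblt : b < 1 / 2 := lt_of_le_of_lt (hb_le k (Finset.ne_of_mem_erase hk)) hptlt
    have hlogb : Real.log b ≤ 0 := Real.log_nonpos (le_of_lt hbpos) (by linarith)
    -- first term
    have t1 : a * Real.log (a / b) ≥ -(Real.exp 1)⁻¹ + (1 - pt) * (-Real.log b) := by
      rw [Real.log_div (ne_of_gt hapos) (ne_of_gt hbpos), mul_sub]
      have e1 : -(Real.exp 1)⁻¹ ≤ a * Real.log a := neg_inv_e_le_mul_log (le_of_lt hapos)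
      have e2 : (1 - pt) * (-Real.log b) ≤ a * (-Real.log b) :=
        mul_le_mul_of_nonneg_right (ha_ge k) (by linarith)
      linarith
    -- second term
    have t2 : a' * Real.log (a' / b') ≥ -(Real.exp 1)⁻¹ := by
      rcases eq_or_lt_of_le (ENNReal.toReal_nonneg : (0:ℝ) ≤ a') with h | h
      · have h' : a' = 0 := h.symm
        rw [h', zero_mul]; have := inv_pos.mpr (Real.exp_pos 1); linarith
      · have hb'pos : 0 < b' := by
          have h1 : P v (A k) + P v (A k)ᶜ = 1 := by
            rw [measure_add_measure_compl (hA k)]; exact measure_univ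
          have h2 : b + b' = 1 := by
            rw [hbdef, hb'def, ← ENNReal.toReal_add (measure_ne_top _ _) (measure_ne_top _ _), h1]
            simp
          linarith
        have hb'le : b' ≤ 1 := ENNReal.toReal_mono ENNReal.one_ne_top prob_le_one
        rw [Real.log_div (ne_of_gt h) (ne_of_gt hb'pos)]
        have e1 : -(Real.exp 1)⁻¹ ≤ a' * Real.log a' := neg_inv_e_le_mul_log (le_of_lt h)
        have e2 : Real.log b' ≤ 0 := Real.log_nonpos (le_of_lt hb'pos) hb'le
        nlinarith
    linarith [hKge, h1, h2, hsplit.ge, hsplit.le]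
  -- summation
  set E := Finset.univ.erase v with hEdef
  have hcardE : E.card = m := by
    rw [hEdef, Finset.card_erase_of_mem (Finset.mem_univ v), Finset.card_univ]
    simp
  have hm0 : (0:ℝ) < m := by exact_mod_cast hm
  set b := fun k : Fin (m+1) => (P v (A k)).toReal with hbdef
  set s := ∑ k ∈ E, b k with hsdef
  have hEne : E.Nonempty := by
    rw [← Finset.card_pos, hcardE]; omega
  have hs_pos : 0 < s := Finset.sum_pos (fun k hk => hb_pos k hk) hEne
  have hs_le : s ≤ pt := by
    have h1 : ∑ k ∈ E, P v (A k) = P v (⋃ k ∈ E, A k) :=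
      (measure_biUnion_finset
        (fun i _ j _ hij => Set.disjoint_iff_inter_eq_empty.mpr (hdisj i j hij))
        (fun k _ => hA k)).symm
    have h2 : P v (⋃ k ∈ E, A k) ≤ p := by
      refine le_trans (measure_mono ?_) (le_iSup (fun i => P i (A i)ᶜ) v)
      refine Set.iUnion₂_subset fun k hk => ?_
      exact Set.subset_compl_iff_disjoint_right.mpr
        (Set.disjoint_iff_inter_eq_empty.mpr (hdisj k v (Finset.ne_of_mem_erase hk)))
    calc s = (∑ k ∈ E, P v (A k)).toReal := by
          rw [ENNReal.toReal_sum (fun k _ => measure_ne_top _ _)]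
      _ ≤ pt := ENNReal.toReal_mono hpne (h1 ▸ h2)
  have hpt_pos : 0 < pt := lt_of_lt_of_le hs_pos hs_le
  have hlogm : 0 ≤ Real.log m := Real.log_nonneg (by exact_mod_cast hm)
  have hsm : 0 < s / m := div_pos hs_pos hm0
  have hlogsum : ∑ k ∈ E, Real.log (b k) ≤ m * Real.log (s / m) := by
    have per : ∀ k ∈ E, Real.log (b k) ≤ Real.log (s / m) + (b k / (s / m) - 1) := by
      intro k hk
      have h1 := Real.log_le_sub_one_of_pos (div_pos (hb_pos k hk) hsm)
      rw [Real.log_div (ne_of_gt (hb_pos k hk)) (ne_of_gt hsm)] at h1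
      linarith
    calc ∑ k ∈ E, Real.log (b k)
        ≤ ∑ k ∈ E, (Real.log (s / m) + (b k / (s / m) - 1)) := Finset.sum_le_sum per
      _ = m * Real.log (s / m) + (s / (s / m) - m) := by
          rw [Finset.sum_add_distrib, Finset.sum_sub_distrib, Finset.sum_const,
            Finset.sum_const, hcardE, ← Finset.sum_div, ← hsdef]
          simp [nsmul_eq_mul]
      _ = m * Real.log (s / m) := by
          have : s / (s / m) = m := by field_simp
          rw [this]; ring
  have hslogpt : Real.log (s / m) ≤ Real.log pt - Real.log m := by
    rw [Real.log_div (ne_of_gt hs_pos) (ne_of_gt hm0)]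
    have : Real.log s ≤ Real.log pt := Real.log_le_log hs_pos hs_le
    linarith
  have hsum_ge : (1 - pt) * (m * (Real.log m - Real.log pt)) - m * (2 * (Real.exp 1)⁻¹)
      ≤ ∑ k ∈ E, (KLdiv (P k) (P v)).toReal := by
    have h1 : ∑ k ∈ E, ((1 - pt) * (-Real.log (b k)) - 2 * (Real.exp 1)⁻¹)
        ≤ ∑ k ∈ E, (KLdiv (P k) (P v)).toReal := Finset.sum_le_sum key
    have h2 : ∑ k ∈ E, ((1 - pt) * (-Real.log (b k)) - 2 * (Real.exp 1)⁻¹)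
        = (1 - pt) * (-∑ k ∈ E, Real.log (b k)) - m * (2 * (Real.exp 1)⁻¹) := by
      rw [Finset.sum_sub_distrib, Finset.sum_const, hcardE, ← Finset.mul_sum,
        ← Finset.sum_neg_distrib]
      simp [nsmul_eq_mul]
    have h3 : (1 - pt) * (m * (Real.log m - Real.log pt))
        ≤ (1 - pt) * (-∑ k ∈ E, Real.log (b k)) := by
      apply mul_le_mul_of_nonneg_left _ (by linarith : (0:ℝ) ≤ 1 - pt)
      have : ∑ k ∈ E, Real.log (b k) ≤ m * (Real.log pt - Real.log m) := by
        calc ∑ k ∈ E, Real.log (b k) ≤ m * Real.log (s / m) := hlogsum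
          _ ≤ m * (Real.log pt - Real.log m) :=
            mul_le_mul_of_nonneg_left hslogpt hm0.le
      linarith [this]
    linarith
  have hχt : Real.log m - Real.log pt - pt * Real.log m + pt * Real.log pt
      - 2 * (Real.exp 1)⁻¹ ≤ χ.toReal := by
    have ht : χ.toReal = (m:ℝ)⁻¹ * ∑ k ∈ E, (KLdiv (P k) (P v)).toReal := by
      rw [← hv, ENNReal.toReal_mul, ENNReal.toReal_inv, ENNReal.toReal_natCast,
        ENNReal.toReal_sum hKne]
    rw [ht]
    have h1 := mul_le_mul_of_nonneg_left hsum_ge (inv_nonneg.mpr hm0.le)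
    have heq : (m:ℝ)⁻¹ * ((1 - pt) * (m * (Real.log m - Real.log pt))
          - m * (2 * (Real.exp 1)⁻¹))
        = Real.log m - Real.log pt - pt * Real.log m + pt * Real.log pt
          - 2 * (Real.exp 1)⁻¹ := by
      field_simp
      ring
    linarith [heq ▸ h1]
  -- final arithmetic
  have hfin : Real.exp (-(3 * Real.exp (-1))) * Real.sqrt m * Real.exp (-χ.toReal) ≤ pt := by
    have hsqrt : Real.sqrt (m:ℝ) = Real.exp (Real.log m * (1/2)) := by
      rw [Real.sqrt_eq_rpow, Real.rpow_def_of_pos hm0]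
    rw [hsqrt, ← Real.exp_add, ← Real.exp_add, ← Real.exp_log hpt_pos]
    apply Real.exp_le_exp.mpr
    have hee : Real.exp (-1) = (Real.exp 1)⁻¹ := Real.exp_neg 1
    have hx1 : 0 ≤ (1/2 - pt) * Real.log m := mul_nonneg (by linarith) hlogm
    have hx2 : -(Real.exp 1)⁻¹ ≤ pt * Real.log pt := neg_inv_e_le_mul_log hpt_pos.le
    nlinarith [hχt, hx1, hx2]
  calc ENNReal.ofReal (min (1/2)
        (Real.exp (-(3 * Real.exp (-1))) * Real.sqrt m * Real.exp (-χ.toReal)))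
      ≤ ENNReal.ofReal pt :=
        ENNReal.ofReal_le_ofReal (le_trans (min_le_right _ _) hfin)
    _ = p := ENNReal.ofReal_toReal hpne
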